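/- In the equivalence relation on Z^{≥0} × Char(G_n) generated by (m, K) ~ (m+n', K + 2PD[v]) whenever K·v + v·v = 2n' and min(m, m+n') ≥ 0, one has (1, K_1) ~ (0, L) where L = (-3, 2, 5, 1, 0, ..., 0); concretely, the vertex sequence 1,1,2,1 applied to K_1 = (1,0,-1,-5,0,...,0) realizes this equivalence with the running U-exponent staying in {0,1}. -/
import Mathlib


/-- Weight of vertex `i` (0-indexed) in the plumbing graph `G n` for `Σ(2,3,6n+1)`. -/
def wt (i : ℕ) : ℤ :=
  if i = 0 then -1 else if i = 1 then -2 else if i = 2 then -3 else if i = 3 then -7 else -2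

/-- Adjacency: vertex 0 joined to 1,2,3; vertices 3,4,…,n+2 form a chain. -/
def adjG (i j : ℕ) : Prop :=
  (i = 0 ∧ (j = 1 ∨ j = 2 ∨ j = 3)) ∨ (j = 0 ∧ (i = 1 ∨ i = 2 ∨ i = 3)) ∨
    (3 ≤ i ∧ 3 ≤ j ∧ (i + 1 = j ∨ j + 1 = i))

instance (i j : ℕ) : Decidable (adjG i j) := by unfold adjG; infer_instance

/-- The intersection matrix of the plumbing graph `G n` (n+3 vertices). -/
def MG (n : ℕ) : Matrix (Fin (n + 3)) (Fin (n + 3)) ℤ :=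
  fun i j => if i = j then wt i.val else if adjG i.val j.val then 1 else 0

/-- Adding `2 PD[v]` to a characteristic vector recorded by its pairing sequence. -/
def applyMove {V : Type*} (M : Matrix V V ℤ) (K : V → ℤ) (v : V) : V → ℤ :=
  fun i => K i + 2 * M v i

/-- Result of performing the moves in the list `l` in order. -/
def pathEnd {V : Type*} (M : Matrix V V ℤ) (K : V → ℤ) (l : List V) : V → ℤ :=
  l.foldl (applyMove M) K

/-- Each move in the list is performed at a vertex `v` with `K·v + v·v = 0`. -/
def PathLegal {V : Type*} (M : Matrix V V ℤ) : (V → ℤ) → List V → Prop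
  | _, [] => True
  | K, v :: l => K v + M v v = 0 ∧ PathLegal M (applyMove M K v) l

/-- `v·v + 2 ≤ K·v ≤ -v·v` for every vertex `v`. -/
def InBounds {V : Type*} (M : Matrix V V ℤ) (K : V → ℤ) : Prop :=
  ∀ v, M v v + 2 ≤ K v ∧ K v ≤ -(M v v)

/-- `K` supports a good full path: a legal sequence of moves ending at `K'` with
`-K'` satisfying the inequalities. -/
def HasGoodPath {V : Type*} (M : Matrix V V ℤ) (K : V → ℤ) : Prop :=
  ∃ l, PathLegal M K l ∧ InBounds M (fun v => -(pathEnd M K l v))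

/-- A bad full path: legal moves reaching a vector with `K'·v + v·v > 0` for some `v`. -/
def BadFullPath {V : Type*} (M : Matrix V V ℤ) (K : V → ℤ) (l : List V) : Prop :=
  PathLegal M K l ∧ ∃ v, pathEnd M K l v + M v v > 0

/-- The basic vectors `K_j`, `1 ≤ j ≤ n+1`, recorded as pairing sequences. -/
def Kv (n j : ℕ) : Fin (n + 3) → ℤ := fun i =>
  if i.val = 0 then 1 else if i.val = 1 then 0 else if i.val = 2 then -1
  else if i.val = 3 then (if j = 2 then -3 else -5)
  else if 3 ≤ j ∧ i.val = j + 1 then 2 else 0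

/-- The vector `L = (-3, 2, 5, 1, 0, …, 0)` on `G_n`. -/
def Lv (n : ℕ) : Fin (n + 3) → ℤ := fun i =>
  if i.val = 0 then -3 else if i.val = 1 then 2 else if i.val = 2 then 5
  else if i.val = 3 then 1 else 0

/-- One step of the generating relation of `K⁺(G)` on `ℤ≥0 × Char(G)`:
`(m, K) ~ (m + n', K + 2PD[v])` whenever `K·v + v·v = 2n'` and `min(m, m+n') ≥ 0`. -/
def StepK {V : Type*} (M : Matrix V V ℤ) (p q : ℤ × (V → ℤ)) : Prop :=
  ∃ v : V, q.2 = applyMove M p.2 v ∧ p.2 v + M v v = 2 * (q.1 - p.1) ∧ 0 ≤ p.1 ∧ 0 ≤ q.1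

/-- Performing the move at vertex `v`, updating the running `U`-exponent. -/
def stepAt {V : Type*} (M : Matrix V V ℤ) (p : ℤ × (V → ℤ)) (v : V) : ℤ × (V → ℤ) :=
  (p.1 + (p.2 v + M v v) / 2, applyMove M p.2 v)

/-- `(1, K_1) ~ (0, L)` in `K⁺(G_n)`, realized concretely by the vertex
sequence `1,1,2,1` (1-indexed; here 0-indexed), with the running `U`-exponent
staying in `{0,1}` throughout. -/
theorem U_K1_equiv_L (n : ℕ) (hn : 1 ≤ n) :
    List.Chain' (StepK (MG n))
        (List.scanl (stepAt (MG n)) (1, Kv n 1) ([0, 0, 1, 0] : List (Fin (n + 3)))) ∧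
      (List.scanl (stepAt (MG n)) (1, Kv n 1)
          ([0, 0, 1, 0] : List (Fin (n + 3)))).getLast? = some (0, Lv n) ∧
      ∀ p ∈ List.scanl (stepAt (MG n)) (1, Kv n 1) ([0, 0, 1, 0] : List (Fin (n + 3))),
        p.1 = 0 ∨ p.1 = 1 := by
  have hfun : applyMove (MG n) (applyMove (MG n) (applyMove (MG n)
      (applyMove (MG n) (Kv n 1) 0) 0) 1) 0 = Lv n := by
    funext i
    simp only [applyMove, MG, Kv, Lv, adjG, wt, Fin.ext_iff]
    have h0 : ((0 : Fin (n+3)) : ℕ) = 0 := rfl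
    have h1 : ((1 : Fin (n+3)) : ℕ) = 1 := rfl
    rw [h0, h1]
    rcases i with ⟨k, hk⟩
    simp only
    split_ifs <;> first | omega | tauto
  have hs : List.scanl (stepAt (MG n)) (1, Kv n 1) ([0, 0, 1, 0] : List (Fin (n + 3))) =
      [(1, Kv n 1),
       (1, applyMove (MG n) (Kv n 1) 0),
       (0, applyMove (MG n) (applyMove (MG n) (Kv n 1) 0) 0),
       (1, applyMove (MG n) (applyMove (MG n) (applyMove (MG n) (Kv n 1) 0) 0) 1),
       (0, applyMove (MG n) (applyMove (MG n) (applyMove (MG n)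
          (applyMove (MG n) (Kv n 1) 0) 0) 1) 0)] := rfl
  rw [hs]
  refine ⟨?_, ?_, ?_⟩
  · refine List.IsChain.cons_cons ⟨0, rfl, rfl, by norm_num, by norm_num⟩ ?_
    refine List.IsChain.cons_cons ⟨0, rfl, rfl, by norm_num, by norm_num⟩ ?_
    refine List.IsChain.cons_cons ⟨1, rfl, rfl, by norm_num, by norm_num⟩ ?_
    exact List.IsChain.cons_cons ⟨0, rfl, rfl, by norm_num, by norm_num⟩ (List.isChain_singleton _)
  · simp only [List.getLast?_cons_cons, List.getLast?_singleton, hfun]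
  · intro p hp
    simp only [List.mem_cons, List.not_mem_nil, or_false] at hp
    rcases hp with h|h|h|h|h <;> subst h <;> simp
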